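/- Let A be a complex Banach space, γ : ℤ → ℝ with γ(n) > 0 for all n, let s, t ≥ 0, and let a : ℤ → ℂ be a symbol satisfying (1 + γ(n)^2)^((s−t)/2) · |a(n)| ≤ C for all n ∈ ℤ, for some constant C ≥ 0. Let f : AddCircle 1 → A be integrable and suppose the family n ↦ (1 + γ(n)^2)^(t/2) ‖fourierCoeff f n‖ is summable over ℤ. Then ∑'_{n} (1 + γ(n)^2)^(s/2) ‖a(n) • fourierCoeff f n‖ ≤ C · ∑'_{n} (1 + γ(n)^2)^(t/2) ‖fourierCoeff f n‖. (Boundedness of the Fourier-multiplier (pseudo-differential) operator with symbol a from 𝔅^t_γ to 𝔅^s_γ on the torus.) -/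

import Mathlib

open MeasureTheory AddCircle

theorem pseudodifferential_bounded
    {A : Type} [NormedAddCommGroup A] [NormedSpace ℂ A] [CompleteSpace A]
    (γ : ℤ → ℝ) (hγ : ∀ n, 0 < γ n) (s t : ℝ) (hs : 0 ≤ s) (ht : 0 ≤ t)
    (a : ℤ → ℂ) (C : ℝ) (hC : 0 ≤ C)
    (ha : ∀ n : ℤ, (1 + γ n ^ 2) ^ ((s - t) / 2) * ‖a n‖ ≤ C)
    (f : AddCircle (1 : ℝ) → A) (hf : Integrable f haarAddCircle)
    (hsum : Summable fun n : ℤ => (1 + γ n ^ 2) ^ (t / 2) * ‖fourierCoeff f n‖) :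
    (∑' n : ℤ, (1 + γ n ^ 2) ^ (s / 2) * ‖a n • fourierCoeff f n‖) ≤
      C * ∑' n : ℤ, (1 + γ n ^ 2) ^ (t / 2) * ‖fourierCoeff f n‖ := by
  have hpos : ∀ n : ℤ, (0:ℝ) < 1 + γ n ^ 2 := fun n => by positivity
  have key : ∀ n : ℤ, (1 + γ n ^ 2) ^ (s / 2) * ‖a n • fourierCoeff f n‖ ≤
      C * ((1 + γ n ^ 2) ^ (t / 2) * ‖fourierCoeff f n‖) := by
    intro n
    have h1 : (1 + γ n ^ 2) ^ (s / 2) =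
        (1 + γ n ^ 2) ^ ((s - t) / 2) * (1 + γ n ^ 2) ^ (t / 2) := by
      rw [← Real.rpow_add (hpos n)]; ring_nf
    rw [norm_smul, h1]
    have : ‖a n‖ = ‖a n‖ := rfl
    calc (1 + γ n ^ 2) ^ ((s - t) / 2) * (1 + γ n ^ 2) ^ (t / 2) * (‖a n‖ * ‖fourierCoeff f n‖)
        = ((1 + γ n ^ 2) ^ ((s - t) / 2) * ‖a n‖) *
          ((1 + γ n ^ 2) ^ (t / 2) * ‖fourierCoeff f n‖) := by rw [this]; ring
      _ ≤ C * ((1 + γ n ^ 2) ^ (t / 2) * ‖fourierCoeff f n‖) := by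
          apply mul_le_mul_of_nonneg_right (ha n); positivity
  rw [← tsum_mul_left]
  exact Summable.tsum_le_tsum key
    (Summable.of_nonneg_of_le (fun n => by positivity) key (hsum.mul_left C))
    (hsum.mul_left C)
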